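/- Let r ≥ 2 be an integer. There exists α0 = α0(r) > 0 such that for every α ∈ (0, α0] there exists ε0 = ε0(r, α) > 0 such that for every ε ∈ (0, ε0] there exists n0 ∈ ℕ with the following property for all n ≥ n0. Suppose G is an n-vertex graph such that the number of r-element subsets of V(G) inducing a complete graph (copies of K_r) is at most ε·n^r, and σ(G) ≥ 2(1 − 1/(r−1) − α)n. Then G admits a √α-independent set of size at least n/(r−1). -/

import Mathlib

open Finset

/-- The number of edges of `G` with both endpoints in the vertex set `T`. -/
noncomputable def edgesWithin {V : Type*} [Fintype V] [DecidableEq V]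
    (G : SimpleGraph V) [DecidableRel G.Adj] (T : Finset V) : ℕ :=
  (G.edgeFinset.filter (fun e => e ∈ T.sym2)).card

lemma pair_eq_sym2 {V : Type*} [DecidableEq V] {a b c d : V} (hab : a ≠ b)
    (h : ({a, b} : Finset V) = {c, d}) : s(a, b) = s(c, d) := by
  have hc : c ∈ ({a, b} : Finset V) := h ▸ mem_insert_self _ _
  have hd : d ∈ ({a, b} : Finset V) := h ▸ (by simp)
  have ha : a ∈ ({c, d} : Finset V) := h ▸ mem_insert_self _ _
  have hb : b ∈ ({c, d} : Finset V) := h ▸ (by simp)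
  simp only [mem_insert, mem_singleton] at hc hd ha hb
  rw [Sym2.eq_iff]
  rcases hc with rfl | rfl
  · rcases hd with rfl | rfl
    · rcases hb with rfl | rfl <;> tauto
    · tauto
  · rcases hd with rfl | rfl
    · tauto
    · rcases ha with rfl | rfl <;> tauto


lemma edgesWithin_le_superset {V : Type*} [Fintype V] [DecidableEq V]
    (G : SimpleGraph V) [DecidableRel G.Adj] {S T : Finset V} :
    edgesWithin G T ≤ edgesWithin G S + (T \ S).card * Fintype.card V := by
  have hsub : G.edgeFinset.filter (fun e => e ∈ T.sym2) ⊆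
      G.edgeFinset.filter (fun e => e ∈ S.sym2) ∪
        (T \ S).biUnion (fun v => G.incidenceFinset v) := by
    intro e he
    simp only [mem_filter, Finset.mem_sym2_iff] at he
    by_cases hS : ∀ a ∈ e, a ∈ S
    · exact mem_union_left _ (mem_filter.2 ⟨he.1, Finset.mem_sym2_iff.2 hS⟩)
    · push_neg at hS
      obtain ⟨a, hae, haS⟩ := hS
      refine mem_union_right _ (mem_biUnion.2 ⟨a, mem_sdiff.2 ⟨he.2 a hae, haS⟩, ?_⟩)
      rw [SimpleGraph.mem_incidenceFinset]
      exact ⟨SimpleGraph.mem_edgeFinset.1 he.1, hae⟩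
  calc edgesWithin G T ≤ _ := card_le_card hsub
    _ ≤ edgesWithin G S + ((T \ S).biUnion (fun v => G.incidenceFinset v)).card :=
        card_union_le _ _
    _ ≤ edgesWithin G S + (T \ S).card * Fintype.card V := by
        gcongr
        refine (card_biUnion_le).trans ?_
        rw [← smul_eq_mul, ← Finset.sum_const]
        refine Finset.sum_le_sum fun v _ => ?_
        rw [G.card_incidenceFinset_eq_degree]
        exact (G.degree_lt_card_verts v).le

/-- endpoints of a sym2 element as a finset -/
def epF {V : Type*} [DecidableEq V] : Sym2 V → Finset V :=
  Sym2.lift ⟨fun a b => ({a, b} : Finset V), fun a b => Finset.pair_comm a b⟩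

@[simp] lemma epF_mk {V : Type*} [DecidableEq V] (a b : V) :
    epF s(a, b) = ({a, b} : Finset V) := rfl

lemma edgesWithin_le_cliques {V : Type*} [Fintype V] [DecidableEq V]
    (G : SimpleGraph V) [DecidableRel G.Adj] {Q C : Finset V} {r : ℕ}
    [DecidablePred fun R : Finset V => Q ⊆ R]
    (hQ : G.IsClique (↑Q : Set V)) (hQcard : Q.card + 2 = r)
    (hC : ∀ v ∈ C, ∀ u ∈ Q, G.Adj u v) :
    edgesWithin G C ≤ ((G.cliqueFinset r).filter (fun R => Q ⊆ R)).card := by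
  have hCQ : ∀ v ∈ C, v ∉ Q := by
    intro v hv hvQ
    exact G.loopless.irrefl v (hC v hv v hvQ)
  have hdisj : ∀ e ∈ G.edgeFinset.filter (fun e => e ∈ C.sym2), Disjoint (epF e) Q := by
    intro e he
    simp only [mem_filter, Finset.mem_sym2_iff] at he
    rw [Finset.disjoint_left]
    intro x hx
    induction e with
    | _ a b =>
      simp only [epF_mk, mem_insert, mem_singleton] at hx
      rcases hx with rfl | rfl
      · exact hCQ x (he.2 x (by simp))
      · exact hCQ x (he.2 x (by simp))
  refine Finset.card_le_card_of_injOn (fun e => Q ∪ epF e) ?_ ?_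
  · intro e he
    have he' := he
    simp only [mem_coe, mem_filter, Finset.mem_sym2_iff] at he'
    induction e with
    | _ a b =>
      have hadj : G.Adj a b := by
        simpa [SimpleGraph.mem_edgeFinset] using he'.1
      have haC : a ∈ C := he'.2 a (by simp)
      have hbC : b ∈ C := he'.2 b (by simp)
      have haQ : a ∉ Q := hCQ a haC
      have hbQ : b ∉ Q := hCQ b hbC
      have hab : a ≠ b := hadj.ne
      have huni : Q ∪ epF s(a, b) = insert a (insert b Q) := by
        simp only [epF_mk]
        ext x
        simp only [mem_union, mem_insert, mem_singleton]
        tauto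
      rw [mem_coe, mem_filter]; simp only []; rw [huni]
      constructor
      · rw [SimpleGraph.mem_cliqueFinset_iff, SimpleGraph.isNClique_iff]
        constructor
        · have h1 : G.IsClique (insert b (↑Q : Set V)) :=
            hQ.insert fun u hu _ => (hC b hbC u hu).symm
          have h2 : G.IsClique (insert a (insert b (↑Q : Set V))) := by
            refine h1.insert fun u hu hne => ?_
            rcases Set.mem_insert_iff.1 hu with rfl | hu
            · exact hadj
            · exact (hC a haC u hu).symm
          simpa using h2
        · rw [card_insert_of_notMem (by simp [haQ, hbQ, hab]), card_insert_of_notMem hbQ]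
          omega
      · intro x hx; simp [hx]
  · intro e1 h1 e2 h2 heq
    simp only at heq
    have hep : epF e1 = epF e2 := by
      have d1 := hdisj e1 h1
      have d2 := hdisj e2 h2
      have : (Q ∪ epF e1) \ Q = (Q ∪ epF e2) \ Q := by rw [heq]
      rwa [Finset.union_sdiff_cancel_left d1.symm, Finset.union_sdiff_cancel_left d2.symm]
        at this
    simp only [mem_coe, mem_filter] at h1
    induction e1 with
    | _ a b =>
      induction e2 with
      | _ c d =>
        have hadj : G.Adj a b := by simpa [SimpleGraph.mem_edgeFinset] using h1.1
        exact pair_eq_sym2 hadj.ne (by simpa using hep)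

lemma sum_filter_mem_le {V : Type*} [DecidableEq V] (C : Finset V) (F : Finset (Finset V))
    (r : ℕ) (hF : ∀ R ∈ F, R.card = r) :
    ∑ v ∈ C, (F.filter (fun R => v ∈ R)).card ≤ F.card * r := by
  have h : ∑ v ∈ C, (F.filter (fun R => v ∈ R)).card
      = ∑ R ∈ F, (C.filter (fun v => v ∈ R)).card := by
    simp only [card_filter]
    rw [Finset.sum_comm]
  rw [h, ← smul_eq_mul, ← Finset.sum_const]
  refine Finset.sum_le_sum fun R hR => ?_
  calc (C.filter (fun v => v ∈ R)).card ≤ R.card :=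
        card_le_card fun v hv => (mem_filter.1 hv).2
    _ = r := hF R hR

set_option maxHeartbeats 4000000 in
/-- Let `r ≥ 2`. There exists `α0 = α0(r) > 0` such that for every `α ∈ (0, α0]` there
exists `ε0 = ε0(r, α) > 0` such that for every `ε ∈ (0, ε0]` there exists `n0` such that
for all `n ≥ n0`: if `G` is an `n`-vertex graph containing at most `ε·n^r` copies of `K_r`
and `σ(G) ≥ 2(1 - 1/(r-1) - α)n`, then `G` admits a `√α`-independent set of size at least
`n/(r-1)`. -/
theorem statement6 (r : ℕ) (hr : 2 ≤ r) :
    ∃ α0 : ℝ, 0 < α0 ∧ ∀ α : ℝ, 0 < α → α ≤ α0 →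
      ∃ ε0 : ℝ, 0 < ε0 ∧ ∀ ε : ℝ, 0 < ε → ε ≤ ε0 →
        ∃ n0 : ℕ, ∀ n : ℕ, n0 ≤ n →
          ∀ (G : SimpleGraph (Fin n)) [DecidableRel G.Adj],
            ((G.cliqueFinset r).card : ℝ) ≤ ε * (n : ℝ) ^ r →
            (∀ x y : Fin n, x ≠ y → ¬ G.Adj x y →
              2 * (1 - 1 / ((r : ℝ) - 1) - α) * (n : ℝ) ≤
                (G.degree x : ℝ) + (G.degree y : ℝ)) →
            ∃ T : Finset (Fin n), (n : ℝ) / ((r : ℝ) - 1) ≤ (T.card : ℝ) ∧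
              (edgesWithin G T : ℝ) ≤ Real.sqrt α * (n : ℝ) ^ 2 := by
  have hr2 : (2:ℝ) ≤ (r:ℝ) := by exact_mod_cast hr
  have hrpos : (0:ℝ) < (r:ℝ) - 1 := by linarith
  have hr0 : (0:ℝ) < (r:ℝ) := by linarith
  refine ⟨1/(16*(r:ℝ)^4), by positivity, fun α hα hα0 => ?_⟩
  have hαnn : 0 ≤ α := hα.le
  have hsqpos : 0 < Real.sqrt α := Real.sqrt_pos.2 hα
  refine ⟨min (Real.sqrt α / (4 * (r:ℝ)^(2*r))) (α^r / ((2:ℝ)^r * (r.factorial : ℝ) * 2)),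
    lt_min (by positivity) (by positivity), fun ε hε hε0 => ?_⟩
  refine ⟨⌈2*(r:ℝ)/α⌉₊ + ⌈4/Real.sqrt α⌉₊ + 1, fun n hn G _ hKr hσ => ?_⟩
  classical
  -- basic facts about n
  have hn1 : 1 ≤ n := by omega
  have hnR : (1:ℝ) ≤ (n:ℝ) := by exact_mod_cast hn1
  have hnpos : (0:ℝ) < (n:ℝ) := by linarith
  have hn2r : 2*(r:ℝ) ≤ α * n := by
    have h0 : ⌈2*(r:ℝ)/α⌉₊ ≤ n := by omega
    have h1 : (⌈2*(r:ℝ)/α⌉₊ : ℝ) ≤ n := Nat.cast_le.2 h0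
    have h2 : 2*(r:ℝ)/α ≤ n := le_trans (Nat.le_ceil _) h1
    rw [div_le_iff₀ hα] at h2
    linarith [h2]
  have hn4 : 4 ≤ Real.sqrt α * n := by
    have h0 : ⌈4/Real.sqrt α⌉₊ ≤ n := by omega
    have h1 : (⌈4/Real.sqrt α⌉₊ : ℝ) ≤ n := Nat.cast_le.2 h0
    have h2 : 4/Real.sqrt α ≤ n := le_trans (Nat.le_ceil _) h1
    rw [div_le_iff₀ hsqpos] at h2
    linarith [h2]
  -- the set of high-degree vertices
  set W : Finset (Fin n) :=
    univ.filter (fun v => (1 - 1/((r:ℝ)-1) - α) * n ≤ (G.degree v : ℝ)) with hWdef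
  have hWdeg : ∀ v ∈ W, (1 - 1/((r:ℝ)-1) - α) * n ≤ (G.degree v : ℝ) :=
    fun v hv => (mem_filter.1 hv).2
  -- complement of W is a clique
  have hBclique : G.IsClique (↑(Wᶜ) : Set (Fin n)) := by
    rw [SimpleGraph.isClique_iff]
    intro x hx y hy hxy
    simp only [coe_compl, Set.mem_compl_iff, mem_coe, hWdef, mem_filter, mem_univ,
      true_and, not_le] at hx hy
    by_contra hnadj
    have := hσ x y hxy hnadj
    linarith
  -- complement of W is small
  have hBsmall : (((Wᶜ : Finset (Fin n))).card : ℝ) ≤ α * n := by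
    by_contra hcon
    push_neg at hcon
    have hrB : r ≤ (Wᶜ : Finset (Fin n)).card := by
      have : (r:ℝ) ≤ ((Wᶜ : Finset (Fin n)).card : ℝ) := by linarith
      exact_mod_cast this
    have hsubC : (Wᶜ : Finset (Fin n)).powersetCard r ⊆ G.cliqueFinset r := by
      intro s hs
      rw [mem_powersetCard] at hs
      rw [SimpleGraph.mem_cliqueFinset_iff]
      exact ⟨hBclique.subset (coe_subset.2 hs.1), hs.2⟩
    have hcount : (((Wᶜ : Finset (Fin n)).card.choose r : ℕ) : ℝ) ≤ ε * n^r := by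
      have h := card_le_card hsubC
      rw [card_powersetCard] at h
      exact le_trans (by exact_mod_cast h) hKr
    have hlow : (α*n/2)^r / (r.factorial : ℝ)
        ≤ (((Wᶜ : Finset (Fin n)).card.choose r : ℕ) : ℝ) := by
      have hcast : (((Wᶜ : Finset (Fin n)).card + 1 - r : ℕ) : ℝ)
          = ((Wᶜ : Finset (Fin n)).card : ℝ) + 1 - r := by
        have : r ≤ (Wᶜ : Finset (Fin n)).card + 1 := by omega
        push_cast [this]
        ring
      have hbase : α*n/2 ≤ (((Wᶜ : Finset (Fin n)).card + 1 - r : ℕ) : ℝ) := by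
        rw [hcast]
        linarith
      calc (α*n/2)^r / (r.factorial : ℝ)
          ≤ ((((Wᶜ : Finset (Fin n)).card + 1 - r : ℕ) : ℝ))^r / (r.factorial : ℝ) := by
            gcongr
        _ ≤ _ := Nat.pow_le_choose r _
    have hflt : ε * (n:ℝ)^r < (α*n/2)^r / (r.factorial : ℝ) := by
      have hεle : ε ≤ α^r / ((2:ℝ)^r * (r.factorial : ℝ) * 2) :=
        le_trans hε0 (min_le_right _ _)
      have heq : α^r / ((2:ℝ)^r * (r.factorial : ℝ) * 2) * (n:ℝ)^r
          = (α*n/2)^r / ((r.factorial : ℝ) * 2) := by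
        rw [div_pow, mul_pow]
        field_simp
      have hpow : (0:ℝ) < (α*n/2)^r := by positivity
      have h2 : (α*n/2)^r / ((r.factorial : ℝ) * 2) < (α*n/2)^r / (r.factorial : ℝ) := by
        apply div_lt_div_of_pos_left hpow
        · positivity
        · have : (0:ℝ) < (r.factorial : ℝ) := by positivity
          linarith
      calc ε * (n:ℝ)^r ≤ α^r / ((2:ℝ)^r * (r.factorial : ℝ) * 2) * (n:ℝ)^r := by
            gcongr
        _ = (α*n/2)^r / ((r.factorial : ℝ) * 2) := heq
        _ < _ := h2
    linarith
  have hWcard : (1 - α) * (n:ℝ) ≤ (W.card : ℝ) := by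
    have h := Finset.card_compl W
    rw [Fintype.card_fin] at h
    have hWn : W.card ≤ n := by
      have := Finset.card_le_univ W
      rwa [Fintype.card_fin] at this
    have hcast : ((Wᶜ : Finset (Fin n)).card : ℝ) = (n:ℝ) - W.card := by
      rw [h]
      push_cast [hWn]
      ring
    have hring : (1-α)*(n:ℝ) = n - α*n := by ring
    linarith [hBsmall, hcast]
  -- common neighborhoods
  set Cnb : Finset (Fin n) → Finset (Fin n) :=
    fun Q => W.filter (fun v => ∀ u ∈ Q, G.Adj u v) with hCnb
  -- the key greedy induction
  have key : ∀ k, k + 2 ≤ r → ∃ Q : Finset (Fin n), G.IsClique (↑Q : Set (Fin n)) ∧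
      Q.card = k ∧ Q ⊆ W ∧
      (1 - 2*α - k*(1/((r:ℝ)-1)+α)) * n ≤ ((Cnb Q).card : ℝ) ∧
      ((((G.cliqueFinset r).filter (fun R => Q ⊆ R)).card : ℝ)
        ≤ ε * (n:ℝ)^r * ((r:ℝ)^2/(n:ℝ))^k) := by
    intro k
    induction k with
    | zero =>
      intro _
      refine ⟨∅, by simp, rfl, empty_subset _, ?_, ?_⟩
      · have hC0 : Cnb ∅ = W := by
          rw [hCnb]
          exact filter_true_of_mem fun v _ => by simp
        rw [hC0]
        push_cast
        nlinarith [hWcard, hα, hnpos]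
      · have : (G.cliqueFinset r).filter (fun R => (∅ : Finset (Fin n)) ⊆ R)
            = G.cliqueFinset r := filter_true_of_mem fun R _ => empty_subset R
        rw [this]
        push_cast
        simpa using hKr
    | succ k ih =>
      intro hk2
      obtain ⟨Q, hQcl, hQcard, hQW, hQC, hQF⟩ := ih (by omega)
      have hk3 : (k:ℝ) ≤ (r:ℝ) - 3 := by
        have : (k:ℝ) + 3 ≤ (r:ℝ) := by exact_mod_cast hk2
        linarith
      have hαsmall : α ≤ 1/((r:ℝ)-1)^2 := by
        have h1 : ((r:ℝ)-1)^2 ≤ 16*(r:ℝ)^4 := by nlinarith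
        have h2 : 1/(16*(r:ℝ)^4) ≤ 1/((r:ℝ)-1)^2 := by
          apply one_div_le_one_div_of_le
          · positivity
          · exact h1
        linarith
      have hbk : (n:ℝ)/((r:ℝ)-1) ≤ (1 - 2*α - k*(1/((r:ℝ)-1)+α)) * n := by
        have hcoef : 1/((r:ℝ)-1) ≤ 1 - 2*α - k*(1/((r:ℝ)-1)+α) := by
          have h1 : (k:ℝ)*(1/((r:ℝ)-1)+α) ≤ ((r:ℝ)-3)*(1/((r:ℝ)-1)+α) := by
            apply mul_le_mul_of_nonneg_right hk3
            positivity
          have h3 : ((r:ℝ)-1)*α ≤ 1/((r:ℝ)-1) := by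
            rw [le_div_iff₀ hrpos]
            calc ((r:ℝ)-1)*α*((r:ℝ)-1) = α * ((r:ℝ)-1)^2 := by ring
              _ ≤ (1/((r:ℝ)-1)^2) * ((r:ℝ)-1)^2 := by
                  apply mul_le_mul_of_nonneg_right hαsmall
                  positivity
              _ = 1 := by field_simp
          have h5 : ((r:ℝ)-1)*(1/((r:ℝ)-1)) = 1 := by field_simp
          have h6 : ((r:ℝ)-3)*(1/((r:ℝ)-1)+α)
              = ((r:ℝ)-1)*(1/((r:ℝ)-1)) + ((r:ℝ)-1)*α - 2*(1/((r:ℝ)-1)) - 2*α := by ring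
          linarith [h1, h3, h5, h6]
        calc (n:ℝ)/((r:ℝ)-1) = (1/((r:ℝ)-1)) * n := by ring
          _ ≤ (1 - 2*α - k*(1/((r:ℝ)-1)+α)) * n := by
              apply mul_le_mul_of_nonneg_right hcoef
              positivity
      have hCpos : (0:ℝ) < ((Cnb Q).card : ℝ) := by
        have : (0:ℝ) < (n:ℝ)/((r:ℝ)-1) := by positivity
        linarith [hbk.trans hQC]
      have hCne : (Cnb Q).Nonempty := by
        rw [← card_pos]
        exact_mod_cast hCpos
      set F := (G.cliqueFinset r).filter (fun R => Q ⊆ R) with hFdef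
      obtain ⟨v, hvC, hvmin⟩ := Finset.exists_min_image (Cnb Q)
        (fun v => (F.filter (fun R => v ∈ R)).card) hCne
      have hsum : ∑ u ∈ Cnb Q, (F.filter (fun R => u ∈ R)).card ≤ F.card * r := by
        apply sum_filter_mem_le
        intro R hR
        have := (mem_filter.1 hR).1
        rw [SimpleGraph.mem_cliqueFinset_iff] at this
        exact this.2
      have hmin_nat : (Cnb Q).card * (F.filter (fun R => v ∈ R)).card ≤ F.card * r := by
        calc (Cnb Q).card * (F.filter (fun R => v ∈ R)).card
            = ∑ _u ∈ Cnb Q, (F.filter (fun R => v ∈ R)).card := by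
              rw [Finset.sum_const, smul_eq_mul]
          _ ≤ ∑ u ∈ Cnb Q, (F.filter (fun R => u ∈ R)).card :=
              Finset.sum_le_sum fun u hu => hvmin u hu
          _ ≤ F.card * r := hsum
      have hgv : ((F.filter (fun R => v ∈ R)).card : ℝ)
          ≤ ε * (n:ℝ)^r * ((r:ℝ)^2/(n:ℝ))^(k+1) := by
        have h1 : ((Cnb Q).card : ℝ) * ((F.filter (fun R => v ∈ R)).card : ℝ)
            ≤ (F.card : ℝ) * r := by exact_mod_cast hmin_nat
        have h2 : ((F.filter (fun R => v ∈ R)).card : ℝ)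
            ≤ ((F.card : ℝ) * r) / ((Cnb Q).card : ℝ) := by
          rw [le_div_iff₀ hCpos]
          linarith [h1]
        have h3 : ((F.card : ℝ) * r) / ((Cnb Q).card : ℝ)
            ≤ ((ε * (n:ℝ)^r * ((r:ℝ)^2/(n:ℝ))^k) * r) / ((n:ℝ)/((r:ℝ)-1)) := by
          apply div_le_div₀
          · positivity
          · apply mul_le_mul_of_nonneg_right hQF (by positivity)
          · positivity
          · exact hbk.trans hQC
        have h4 : ((ε * (n:ℝ)^r * ((r:ℝ)^2/(n:ℝ))^k) * r) / ((n:ℝ)/((r:ℝ)-1))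
            = (ε * (n:ℝ)^r * ((r:ℝ)^2/(n:ℝ))^k) * ((r:ℝ)*((r:ℝ)-1)/(n:ℝ)) := by
          field_simp
        have h5 : (ε * (n:ℝ)^r * ((r:ℝ)^2/(n:ℝ))^k) * ((r:ℝ)*((r:ℝ)-1)/(n:ℝ))
            ≤ (ε * (n:ℝ)^r * ((r:ℝ)^2/(n:ℝ))^k) * ((r:ℝ)^2/(n:ℝ)) := by
          apply mul_le_mul_of_nonneg_left
          · apply div_le_div₀ (by positivity) (by nlinarith) hnpos le_rfl
          · positivity
        calc ((F.filter (fun R => v ∈ R)).card : ℝ)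
            ≤ ((F.card : ℝ) * r) / ((Cnb Q).card : ℝ) := h2
          _ ≤ ((ε * (n:ℝ)^r * ((r:ℝ)^2/(n:ℝ))^k) * r) / ((n:ℝ)/((r:ℝ)-1)) := h3
          _ = (ε * (n:ℝ)^r * ((r:ℝ)^2/(n:ℝ))^k) * ((r:ℝ)*((r:ℝ)-1)/(n:ℝ)) := h4
          _ ≤ (ε * (n:ℝ)^r * ((r:ℝ)^2/(n:ℝ))^k) * ((r:ℝ)^2/(n:ℝ)) := h5
          _ = ε * (n:ℝ)^r * ((r:ℝ)^2/(n:ℝ))^(k+1) := by rw [pow_succ]; ring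
      have hvW : v ∈ W := (mem_filter.1 hvC).1
      have hvadj : ∀ u ∈ Q, G.Adj u v := (mem_filter.1 hvC).2
      have hvQn : v ∉ Q := fun h => G.loopless.irrefl v (hvadj v h)
      refine ⟨insert v Q, ?_, ?_, ?_, ?_, ?_⟩
      · rw [coe_insert]
        exact hQcl.insert fun u hu _ => (hvadj u hu).symm
      · rw [card_insert_of_notMem hvQn, hQcard]
      · exact insert_subset hvW hQW
      · -- common neighborhood bound
        have hsub : Cnb Q ⊆ Cnb (insert v Q) ∪ (univ \ G.neighborFinset v) := by
          intro w hw
          by_cases hadj : G.Adj v w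
          · apply mem_union_left
            rw [hCnb] at hw ⊢
            simp only [mem_filter] at hw ⊢
            refine ⟨hw.1, fun u hu => ?_⟩
            rcases mem_insert.1 hu with rfl | hu
            · exact hadj
            · exact hw.2 u hu
          · apply mem_union_right
            rw [mem_sdiff]
            exact ⟨mem_univ w, fun h => hadj ((SimpleGraph.mem_neighborFinset _ _ _).1 h)⟩
        have hcard : (Cnb Q).card ≤ (Cnb (insert v Q)).card + (n - G.degree v) := by
          calc (Cnb Q).card ≤ (Cnb (insert v Q) ∪ (univ \ G.neighborFinset v)).card :=
                card_le_card hsub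
            _ ≤ (Cnb (insert v Q)).card + (univ \ G.neighborFinset v).card :=
                card_union_le _ _
            _ = (Cnb (insert v Q)).card + (n - G.degree v) := by
                rw [card_sdiff_of_subset (subset_univ _), card_univ, Fintype.card_fin,
                  G.card_neighborFinset_eq_degree]
        have hdegn : G.degree v ≤ n := by
          have := G.degree_lt_card_verts v
          rw [Fintype.card_fin] at this
          omega
        have hcastsub : ((n - G.degree v : ℕ) : ℝ) = (n:ℝ) - G.degree v := by
          push_cast [hdegn]
          ring
        have hcardR : ((Cnb Q).card : ℝ)
            ≤ ((Cnb (insert v Q)).card : ℝ) + ((n:ℝ) - G.degree v) := by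
          have := hcard
          have hc : ((Cnb Q).card : ℝ)
              ≤ ((Cnb (insert v Q)).card : ℝ) + ((n - G.degree v : ℕ) : ℝ) := by
            exact_mod_cast this
          rwa [hcastsub] at hc
        have hdv := hWdeg v hvW
        push_cast
        nlinarith [hQC, hcardR, hdv]
      · have hFeq : (G.cliqueFinset r).filter (fun R => insert v Q ⊆ R)
            = F.filter (fun R => v ∈ R) := by
          rw [hFdef, filter_filter]
          apply filter_congr
          intro R _
          simp [insert_subset_iff, and_comm]
        rw [hFeq]
        exact_mod_cast hgv
  -- apply the induction at k = r - 2
  obtain ⟨Q, hQcl, hQcard, hQW, hQC, hQF⟩ := key (r-2) (by omega)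
  set C := Cnb Q with hCdef
  set F := (G.cliqueFinset r).filter (fun R => Q ⊆ R) with hFdef
  have hrcast : ((r - 2 : ℕ) : ℝ) = (r:ℝ) - 2 := by
    push_cast [hr]
    ring
  -- lower bound for |C|
  have hClow : (1/((r:ℝ)-1) - (r:ℝ)*α) * n ≤ (C.card : ℝ) := by
    have hco : (1:ℝ) - 2*α - ((r:ℝ)-2)*(1/((r:ℝ)-1)+α) = 1/((r:ℝ)-1) - (r:ℝ)*α := by
      field_simp
      ring
    calc (1/((r:ℝ)-1) - (r:ℝ)*α) * n
        = (1 - 2*α - ((r:ℝ)-2)*(1/((r:ℝ)-1)+α)) * n := by rw [hco]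
      _ = (1 - 2*α - ((r - 2 : ℕ):ℝ)*(1/((r:ℝ)-1)+α)) * n := by rw [hrcast]
      _ ≤ (C.card : ℝ) := hQC
  -- edge bound inside C
  have hCadj : ∀ v ∈ C, ∀ u ∈ Q, G.Adj u v := fun v hv => (mem_filter.1 hv).2
  have hedgeF : edgesWithin G C ≤ F.card := by
    rw [hFdef]
    exact edgesWithin_le_cliques G hQcl (by omega) hCadj
  have hedge : (edgesWithin G C : ℝ) ≤ (Real.sqrt α/4) * (n:ℝ)^2 := by
    have h2 : (F.card : ℝ) ≤ ε * (n:ℝ)^r * ((r:ℝ)^2/(n:ℝ))^(r-2) := hQF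
    have hnr : (n:ℝ)^r = (n:ℝ)^(r-2) * (n:ℝ)^2 := by
      rw [← pow_add]
      congr 1
      omega
    have h3 : ε * (n:ℝ)^r * ((r:ℝ)^2/(n:ℝ))^(r-2) ≤ ε * (r:ℝ)^(2*r) * (n:ℝ)^2 := by
      have hnpow : (0:ℝ) < (n:ℝ)^(r-2) := by positivity
      calc ε * (n:ℝ)^r * ((r:ℝ)^2/(n:ℝ))^(r-2)
          = ε * (n:ℝ)^2 * ((r:ℝ)^2)^(r-2) := by
            rw [div_pow, hnr]
            field_simp
        _ = ε * (n:ℝ)^2 * (r:ℝ)^(2*(r-2)) := by rw [← pow_mul]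
        _ ≤ ε * (n:ℝ)^2 * (r:ℝ)^(2*r) := by
            gcongr
            · linarith
            · omega
        _ = ε * (r:ℝ)^(2*r) * (n:ℝ)^2 := by ring
    have h4 : ε * (r:ℝ)^(2*r) ≤ Real.sqrt α/4 := by
      have hεle : ε ≤ Real.sqrt α / (4 * (r:ℝ)^(2*r)) := le_trans hε0 (min_le_left _ _)
      have hrpow : (0:ℝ) < (r:ℝ)^(2*r) := by positivity
      calc ε * (r:ℝ)^(2*r) ≤ (Real.sqrt α / (4 * (r:ℝ)^(2*r))) * (r:ℝ)^(2*r) := by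
            gcongr
        _ = Real.sqrt α/4 := by
            field_simp
    calc (edgesWithin G C : ℝ) ≤ (F.card : ℝ) := by exact_mod_cast hedgeF
      _ ≤ ε * (n:ℝ)^r * ((r:ℝ)^2/(n:ℝ))^(r-2) := h2
      _ ≤ ε * (r:ℝ)^(2*r) * (n:ℝ)^2 := h3
      _ ≤ (Real.sqrt α/4) * (n:ℝ)^2 := by
          apply mul_le_mul_of_nonneg_right h4
          positivity
  -- build T
  set t0 := ⌈(n:ℝ)/((r:ℝ)-1)⌉₊ with ht0def
  have ht0n : t0 ≤ n := by
    apply Nat.ceil_le.2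
    rw [div_le_iff₀ hrpos]
    nlinarith
  have hCn : C.card ≤ n := by
    have := Finset.card_le_univ C
    rwa [Fintype.card_fin] at this
  obtain ⟨T, hCT, -, hTcard⟩ := exists_subsuperset_card_eq (subset_univ C)
    (le_max_right t0 C.card) (by rw [card_univ, Fintype.card_fin]; exact max_le ht0n hCn)
  refine ⟨T, ?_, ?_⟩
  · rw [hTcard]
    calc (n:ℝ)/((r:ℝ)-1) ≤ (t0 : ℝ) := Nat.le_ceil _
      _ ≤ ((max t0 C.card : ℕ) : ℝ) := by exact_mod_cast le_max_left _ _
  · have hmain : edgesWithin G T ≤ edgesWithin G C + (T \ C).card * n := by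
      have := edgesWithin_le_superset G (S := C) (T := T)
      rwa [Fintype.card_fin] at this
    have hTCle : C.card ≤ T.card := card_le_card hCT
    have hTCcard : ((T \ C).card : ℝ) = (T.card : ℝ) - C.card := by
      rw [card_sdiff_of_subset hCT]
      push_cast [hTCle]
      ring
    have hTCsmall : ((T \ C).card : ℝ) ≤ (r:ℝ)*α*n + 1 := by
      rw [hTCcard, hTcard]
      rcases le_total t0 C.card with hle | hle
      · rw [max_eq_right hle]
        have : (0:ℝ) ≤ (r:ℝ)*α*n := by positivity
        linarith
      · rw [max_eq_left hle]
        have h1 : (t0 : ℝ) < (n:ℝ)/((r:ℝ)-1) + 1 := Nat.ceil_lt_add_one (by positivity)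
        have h2 : (n:ℝ)/((r:ℝ)-1) = (1/((r:ℝ)-1))*n := by ring
        linarith [hClow]
    have hralpha : (r:ℝ)*α ≤ Real.sqrt α/4 := by
      have hss : Real.sqrt α * Real.sqrt α = α := Real.mul_self_sqrt hαnn
      have hsa' : Real.sqrt α ≤ 1/(4*(r:ℝ)) := by
        have h1 : Real.sqrt α ≤ Real.sqrt (1/(16*(r:ℝ)^4)) := Real.sqrt_le_sqrt hα0
        have h2 : Real.sqrt (1/(16*(r:ℝ)^4)) = 1/(4*(r:ℝ)^2) := by
          rw [show (1/(16*(r:ℝ)^4)) = (1/(4*(r:ℝ)^2))^2 by ring]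
          exact Real.sqrt_sq (by positivity)
        have h3 : 1/(4*(r:ℝ)^2) ≤ 1/(4*(r:ℝ)) := by
          apply one_div_le_one_div_of_le
          · positivity
          · nlinarith
        linarith
      calc (r:ℝ)*α = (r:ℝ)*Real.sqrt α*Real.sqrt α := by rw [mul_assoc, hss]
        _ ≤ (r:ℝ)*(1/(4*(r:ℝ)))*Real.sqrt α := by
            apply mul_le_mul_of_nonneg_right ?_ (Real.sqrt_nonneg α)
            exact mul_le_mul_of_nonneg_left hsa' hr0.le
        _ = Real.sqrt α/4 := by
            field_simp
    have hnsq : (n:ℝ) ≤ (Real.sqrt α/4) * (n:ℝ)^2 := by nlinarith [hn4, hnpos]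
    have hfin : ((T \ C).card : ℝ) * n ≤ (Real.sqrt α/4) * (n:ℝ)^2 + (Real.sqrt α/4) * (n:ℝ)^2 := by
      calc ((T \ C).card : ℝ) * n ≤ ((r:ℝ)*α*n + 1) * n := by
            apply mul_le_mul_of_nonneg_right hTCsmall hnpos.le
        _ = (r:ℝ)*α*(n:ℝ)^2 + n := by ring
        _ ≤ (Real.sqrt α/4) * (n:ℝ)^2 + (Real.sqrt α/4) * (n:ℝ)^2 := by
            have : (r:ℝ)*α*(n:ℝ)^2 ≤ (Real.sqrt α/4) * (n:ℝ)^2 := by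
              apply mul_le_mul_of_nonneg_right hralpha
              positivity
            linarith
    have hcast2 : (edgesWithin G T : ℝ) ≤ (edgesWithin G C : ℝ) + ((T \ C).card : ℝ) * n := by
      exact_mod_cast hmain
    have hlast : (0:ℝ) ≤ (Real.sqrt α/4) * (n:ℝ)^2 := by positivity
    calc (edgesWithin G T : ℝ) ≤ (edgesWithin G C : ℝ) + ((T \ C).card : ℝ) * n := hcast2
      _ ≤ (Real.sqrt α/4) * (n:ℝ)^2 + ((Real.sqrt α/4) * (n:ℝ)^2 + (Real.sqrt α/4) * (n:ℝ)^2) := by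
          linarith [hedge, hfin]
      _ ≤ Real.sqrt α * (n:ℝ)^2 := by nlinarith [hlast]
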